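/- Piecewise affine continuous functions vanishing at 0, with rational breakpoints and rational values at breakpoints, are dense in 𝐖 for the CUCZ topology (the topology generated by the uniform-on-compacts pseudometrics d_t^{CU} together with the zero-control pseudometrics d_t^{CZ}). The same holds with nonnegative piecewise affine functions inside 𝐖₊. -/

import Mathlib

open MeasureTheory

/-- The zero set of a path (only nonnegative times are considered). -/
def zeroSet (f : ℝ → ℝ) : Set ℝ := {s : ℝ | 0 ≤ s ∧ f s = 0}

/-- The zero-control pseudometric. -/
noncomputable def dCZ (t : ℝ) (f g : ℝ → ℝ) : ℝ :=
  sInf {δ : ℝ | 0 < δ ∧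
    (∀ s, 0 ≤ s → s ≤ t - δ → f s = 0 → ∃ z ∈ zeroSet g, |s - z| < δ) ∧
    (∀ s, 0 ≤ s → s ≤ t - δ → g s = 0 → ∃ z ∈ zeroSet f, |s - z| < δ)}

/-- The uniform pseudometric on `[0,t]`. -/
noncomputable def dCU (t : ℝ) (f g : ℝ → ℝ) : ℝ :=
  sSup ((fun s => |f s - g s|) '' Set.Icc 0 t)

/-- `g` is continuous, vanishes at `0`, is piecewise affine on `[0,∞)` with rational
subdivision points and rational values at these points, and is constant after the last
subdivision point. -/
def PiecewiseAffineRat (g : ℝ → ℝ) : Prop :=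
  ∃ (n : ℕ) (c : Fin (n + 1) → ℚ) (v : Fin (n + 1) → ℚ),
    StrictMono c ∧ c 0 = 0 ∧ v 0 = 0 ∧
    (∀ i : Fin n, ∀ x : ℝ, (c i.castSucc : ℝ) ≤ x → x ≤ (c i.succ : ℝ) →
      g x = (v i.castSucc : ℝ) +
        ((v i.succ : ℝ) - (v i.castSucc : ℝ)) * (x - (c i.castSucc : ℝ)) /
          ((c i.succ : ℝ) - (c i.castSucc : ℝ))) ∧
    (∀ x : ℝ, (c (Fin.last n) : ℝ) ≤ x → g x = (v (Fin.last n) : ℝ))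

/-- Rational approximation with controlled sign behaviour. -/
private lemma exists_approx (ε a : ℝ) (hε : 0 < ε) :
    ∃ r : ℚ, |(r : ℝ) - a| ≤ ε ∧ (|a| < ε → r = 0) ∧
      (0 < (r : ℝ) → ε ≤ a) ∧ ((r : ℝ) < 0 → a ≤ -ε) ∧ (0 ≤ a → 0 ≤ (r : ℝ)) := by
  by_cases h : |a| < ε
  · refine ⟨0, ?_, fun _ => rfl, by simp, by simp, by simp⟩
    rw [Rat.cast_zero, zero_sub, abs_neg]
    exact h.le
  · push_neg at h
    rcases le_or_gt ε a with ha | ha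
    · obtain ⟨r, hr1, hr2⟩ := exists_rat_btwn (show a - ε < a by linarith)
      refine ⟨r, ?_, fun hc => absurd hc (not_lt.2 h), fun _ => ha, fun hc => ?_, fun _ => ?_⟩
      · rw [abs_le]; constructor <;> linarith
      · linarith
      · linarith
    · have ha' : a ≤ -ε := by
        rcases abs_cases a with ⟨h1, _⟩ | ⟨h1, _⟩
        · linarith
        · linarith
      obtain ⟨r, hr1, hr2⟩ := exists_rat_btwn (show a < a + ε by linarith)
      refine ⟨r, ?_, fun hc => absurd hc (not_lt.2 h), fun hc => ?_, fun _ => ha', fun hc => ?_⟩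
      · rw [abs_le]; constructor <;> linarith
      · linarith
      · linarith

set_option maxHeartbeats 800000 in
/-- piecewise affine continuous functions vanishing at `0`, with rational
breakpoints and rational values there, are dense in `𝐖` for the CUCZ topology; and for
nonnegative paths the approximant can be chosen nonnegative. -/
theorem piecewise_affine_rat_dense_CUCZ
    (f : ℝ → ℝ) (hf : Continuous f) (hf0 : f 0 = 0)
    (t ρ δ : ℝ) (ht : 0 < t) (hρ : 0 < ρ) (hδ : 0 < δ) :
    ∃ g : ℝ → ℝ, PiecewiseAffineRat g ∧
      dCU t f g < ρ ∧ dCZ t f g < δ ∧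
      ((∀ s : ℝ, 0 ≤ s → 0 ≤ f s) → ∀ s : ℝ, 0 ≤ s → 0 ≤ g s) := by
  classical
  have hZne : (zeroSet f).Nonempty := ⟨0, le_refl 0, hf0⟩
  -- the compact set of points of [0,t] far from the zero set of f
  set K : Set ℝ := Set.Icc 0 t ∩ {s | δ / 2 ≤ Metric.infDist s (zeroSet f)} with hKdef
  have hKclosed : IsClosed K :=
    isClosed_Icc.inter (isClosed_le continuous_const (Metric.continuous_infDist_pt _))
  have hKcompact : IsCompact K :=
    isCompact_Icc.of_isClosed_subset hKclosed Set.inter_subset_left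
  obtain ⟨m, hm0, hmK⟩ : ∃ m : ℝ, 0 < m ∧ ∀ s ∈ K, m ≤ |f s| := by
    by_cases hKe : K.Nonempty
    · obtain ⟨s₀, hs₀K, hmin⟩ := hKcompact.exists_isMinOn hKe
        ((continuous_abs.comp hf).continuousOn)
      refine ⟨|f s₀|, ?_, fun s hs => hmin hs⟩
      rcases eq_or_ne (f s₀) 0 with h0 | h0
      · exfalso
        have hs0mem : s₀ ∈ zeroSet f := ⟨hs₀K.1.1, h0⟩
        have h2 := hs₀K.2
        rw [Set.mem_setOf_eq, Metric.infDist_zero_of_mem hs0mem] at h2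
        linarith
      · exact abs_pos.2 h0
    · exact ⟨1, one_pos, fun s hs => absurd ⟨s, hs⟩ hKe⟩
  set ε : ℝ := min (ρ / 3) (m / 2) with hεdef
  have hε : 0 < ε := lt_min (by linarith) (by linarith)
  have hερ : ε ≤ ρ / 3 := min_le_left _ _
  have hεm : ε < m := lt_of_le_of_lt (min_le_right _ _) (by linarith)
  -- uniform continuity on [0, t+1]
  have huc := (isCompact_Icc (a := (0 : ℝ)) (b := t + 1)).uniformContinuousOn_of_continuous
    hf.continuousOn
  rw [Metric.uniformContinuousOn_iff] at huc
  obtain ⟨h0, hh0, hucd⟩ := huc ε hε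
  -- rational mesh size
  obtain ⟨q, hq0, hqlt⟩ := exists_rat_btwn
    (show (0 : ℝ) < min (min h0 (δ / 8)) (1 / 2) from
      lt_min (lt_min hh0 (by linarith)) (by norm_num))
  have hQ0 : (0 : ℝ) < (q : ℝ) := hq0
  have hQh0 : (q : ℝ) < h0 := lt_of_lt_of_le hqlt (le_trans (min_le_left _ _) (min_le_left _ _))
  have hQδ : (q : ℝ) < δ / 8 := lt_of_lt_of_le hqlt (le_trans (min_le_left _ _) (min_le_right _ _))
  have hQhalf : (q : ℝ) < 1 / 2 := lt_of_lt_of_le hqlt (min_le_right _ _)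
  have hq0' : (0 : ℚ) < q := by exact_mod_cast hQ0
  obtain ⟨n, hn1, htn⟩ : ∃ n : ℕ, 1 ≤ n ∧ t < (n : ℝ) * (q : ℝ) := by
    refine ⟨⌊t / (q : ℝ)⌋₊ + 1, Nat.le_add_left 1 _, ?_⟩
    have h1 : t / (q : ℝ) < ((⌊t / (q : ℝ)⌋₊ + 1 : ℕ) : ℝ) := by
      have := Nat.lt_floor_add_one (t / (q : ℝ))
      push_cast
      push_cast at this
      linarith
    calc t = t / (q : ℝ) * (q : ℝ) := by field_simp
    _ < ((⌊t / (q : ℝ)⌋₊ + 1 : ℕ) : ℝ) * (q : ℝ) := mul_lt_mul_of_pos_right h1 hQ0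
  have hnQpos : 0 < (n : ℝ) * (q : ℝ) := lt_trans ht htn
  -- rational values at grid points
  obtain ⟨w, hw⟩ : ∃ w : ℕ → ℚ, ∀ k : ℕ,
      |((w k : ℚ) : ℝ) - f ((k : ℝ) * (q : ℝ))| ≤ ε ∧
      (|f ((k : ℝ) * (q : ℝ))| < ε → w k = 0) ∧
      (0 < ((w k : ℚ) : ℝ) → ε ≤ f ((k : ℝ) * (q : ℝ))) ∧
      (((w k : ℚ) : ℝ) < 0 → f ((k : ℝ) * (q : ℝ)) ≤ -ε) ∧
      (0 ≤ f ((k : ℝ) * (q : ℝ)) → 0 ≤ ((w k : ℚ) : ℝ)) :=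
    ⟨fun k => Classical.choose (exists_approx ε (f ((k : ℝ) * (q : ℝ))) hε),
     fun k => Classical.choose_spec (exists_approx ε (f ((k : ℝ) * (q : ℝ))) hε)⟩
  have hw0 : w 0 = 0 := (hw 0).2.1 (by simpa [hf0] using hε)
  -- the approximating function
  set g : ℝ → ℝ := fun x =>
    if x ≤ 0 then 0 else
    if (n : ℝ) * (q : ℝ) ≤ x then (w n : ℝ) else
      (w ⌊x / (q : ℝ)⌋₊ : ℝ) +
        ((w (⌊x / (q : ℝ)⌋₊ + 1) : ℝ) - (w ⌊x / (q : ℝ)⌋₊ : ℝ)) *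
          (x - (⌊x / (q : ℝ)⌋₊ : ℝ) * (q : ℝ)) / (q : ℝ) with hgdef
  have htail : ∀ x : ℝ, (n : ℝ) * (q : ℝ) ≤ x → g x = (w n : ℝ) := by
    intro x hx
    have hx0 : ¬ x ≤ 0 := not_le.2 (lt_of_lt_of_le hnQpos hx)
    simp only [hgdef, if_neg hx0, if_pos hx]
  have haffine : ∀ k : ℕ, k < n → ∀ x : ℝ, (k : ℝ) * (q : ℝ) ≤ x → x ≤ ((k : ℝ) + 1) * (q : ℝ) →
      g x = (w k : ℝ) + ((w (k + 1) : ℝ) - (w k : ℝ)) * (x - (k : ℝ) * (q : ℝ)) / (q : ℝ) := by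
    intro k hk x h1 h2
    by_cases hx0 : x ≤ 0
    · have hk0 : (k : ℝ) = 0 := by
        by_contra hne
        have hkpos : 0 < (k : ℝ) := lt_of_le_of_ne (Nat.cast_nonneg k) (Ne.symm hne)
        have := mul_pos hkpos hQ0
        linarith
      have hxeq : x = 0 := by
        have h1' := h1
        rw [hk0, zero_mul] at h1'
        exact le_antisymm hx0 h1'
      have hgx : g x = 0 := by simp only [hgdef, hxeq, if_pos (le_refl (0 : ℝ))]
      have hkn0 : k = 0 := by exact_mod_cast hk0
      rw [hgx, hxeq, hkn0]
      simp [hw0]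
    · have hxpos : 0 < x := not_le.1 hx0
      rcases lt_or_ge x ((n : ℝ) * (q : ℝ)) with hxn | hxn
      · rcases lt_or_eq_of_le h2 with hlt | heq
        · have hfl : ⌊x / (q : ℝ)⌋₊ = k := by
            rw [Nat.floor_eq_iff (div_nonneg hxpos.le hQ0.le)]
            constructor
            · rw [le_div_iff₀ hQ0]; exact h1
            · rw [div_lt_iff₀ hQ0]; linarith
          simp only [hgdef, if_neg hx0, if_neg (not_le.2 hxn), hfl]
        · -- x = (k+1) q exactly
          have hk1n : (k : ℝ) + 1 < (n : ℝ) := by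
            by_contra hcon
            push_neg at hcon
            have : (n : ℝ) * (q : ℝ) ≤ ((k : ℝ) + 1) * (q : ℝ) :=
              mul_le_mul_of_nonneg_right hcon hQ0.le
            linarith [heq, hxn]
          have hfl : ⌊x / (q : ℝ)⌋₊ = k + 1 := by
            have : x / (q : ℝ) = ((k : ℕ) + 1 : ℕ) := by
              rw [heq]
              push_cast
              field_simp
            rw [this, Nat.floor_natCast]
          simp only [hgdef, if_neg hx0, if_neg (not_le.2 hxn), hfl]
          rw [heq]
          have hQne : (q : ℝ) ≠ 0 := ne_of_gt hQ0
          field_simp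
          push_cast
          ring
      · -- x ≥ n q : forces x = (k+1) q = n q
        have hk1n : (k : ℝ) + 1 ≤ (n : ℝ) := by exact_mod_cast Nat.succ_le_of_lt hk
        have hle : ((k : ℝ) + 1) * (q : ℝ) ≤ (n : ℝ) * (q : ℝ) :=
          mul_le_mul_of_nonneg_right hk1n hQ0.le
        have hxeq : x = ((k : ℝ) + 1) * (q : ℝ) := le_antisymm h2 (le_trans hle hxn)
        have hkeq : k + 1 = n := by
          have h3 : ((k : ℝ) + 1) * (q : ℝ) = (n : ℝ) * (q : ℝ) := le_antisymm hle (by linarith)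
          have h4 : ((k : ℝ) + 1) = (n : ℝ) := mul_right_cancel₀ (ne_of_gt hQ0) h3
          exact_mod_cast h4
        rw [htail x hxn, ← hkeq, hxeq]
        have hQne : (q : ℝ) ≠ 0 := ne_of_gt hQ0
        field_simp
        ring
  have hgrid : ∀ k : ℕ, k ≤ n → g ((k : ℝ) * (q : ℝ)) = (w k : ℝ) := by
    intro k hk
    rcases lt_or_eq_of_le hk with hlt | heq
    · rw [haffine k hlt ((k : ℝ) * (q : ℝ)) (le_refl _)
        (mul_le_mul_of_nonneg_right (by linarith) hQ0.le)]
      simp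
    · rw [heq]
      exact htail _ (le_refl _)
  -- structural decomposition on [0, n q]
  have hstruct : ∀ x : ℝ, 0 ≤ x → x ≤ (n : ℝ) * (q : ℝ) →
      ∃ k : ℕ, k < n ∧ (k : ℝ) * (q : ℝ) ≤ x ∧ x ≤ ((k : ℝ) + 1) * (q : ℝ) ∧
        ∃ lam : ℝ, 0 ≤ lam ∧ lam ≤ 1 ∧
          g x = (1 - lam) * (w k : ℝ) + lam * (w (k + 1) : ℝ) := by
    intro x hx0 hxn
    rcases lt_or_eq_of_le hxn with hlt | heq
    · set k : ℕ := ⌊x / (q : ℝ)⌋₊ with hkdef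
      have hxq0 : 0 ≤ x / (q : ℝ) := div_nonneg hx0 hQ0.le
      have hkn : k < n := by
        rw [hkdef, Nat.floor_lt hxq0, div_lt_iff₀ hQ0]
        linarith
      have h1 : (k : ℝ) * (q : ℝ) ≤ x := by
        rw [← le_div_iff₀ hQ0]
        exact Nat.floor_le hxq0
      have h2 : x ≤ ((k : ℝ) + 1) * (q : ℝ) := by
        rw [← div_le_iff₀ hQ0]
        exact (Nat.lt_floor_add_one (x / (q : ℝ))).le
      refine ⟨k, hkn, h1, h2, (x - (k : ℝ) * (q : ℝ)) / (q : ℝ), div_nonneg (by linarith) hQ0.le, ?_, ?_⟩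
      · rw [div_le_one hQ0]; linarith
      · rw [haffine k hkn x h1 h2]
        field_simp
        ring
    · -- x = n q
      refine ⟨n - 1, Nat.sub_lt (lt_of_lt_of_le one_pos hn1) one_pos, ?_, ?_, 1, zero_le_one,
        le_refl 1, ?_⟩
      · have h5 : ((n - 1 : ℕ) : ℝ) ≤ (n : ℝ) := by
          exact_mod_cast Nat.sub_le n 1
        calc ((n - 1 : ℕ) : ℝ) * (q : ℝ) ≤ (n : ℝ) * (q : ℝ) :=
              mul_le_mul_of_nonneg_right h5 hQ0.le
          _ = x := heq.symm
      · have : ((n - 1 : ℕ) : ℝ) + 1 = (n : ℝ) := by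
          have := Nat.succ_pred_eq_of_pos (lt_of_lt_of_le one_pos hn1)
          exact_mod_cast this
        rw [this]
        exact le_of_eq heq
      · have hsub : (n - 1) + 1 = n := Nat.succ_pred_eq_of_pos (lt_of_lt_of_le one_pos hn1)
        rw [hsub, htail x (le_of_eq heq.symm)]
        ring
  -- uniform bound on [0, t]
  have hbound : ∀ s ∈ Set.Icc (0 : ℝ) t, |f s - g s| ≤ 2 * ε := by
    intro s hs
    obtain ⟨k, hkn, hk1, hk2, lam, hl0, hl1, hgx⟩ :=
      hstruct s hs.1 (le_trans hs.2 htn.le)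
    have hsI : s ∈ Set.Icc (0 : ℝ) (t + 1) := ⟨hs.1, by linarith [hs.2]⟩
    have hkqI : (k : ℝ) * (q : ℝ) ∈ Set.Icc (0 : ℝ) (t + 1) :=
      ⟨by positivity, by linarith [hk1, hs.2]⟩
    have hkq1I : ((k : ℝ) + 1) * (q : ℝ) ∈ Set.Icc (0 : ℝ) (t + 1) := by
      constructor
      · positivity
      · have : ((k : ℝ) + 1) * (q : ℝ) = (k : ℝ) * (q : ℝ) + (q : ℝ) := by ring
        rw [this]
        linarith [hk1, hs.2, hQhalf]
    have e1 : |f s - (w k : ℝ)| ≤ 2 * ε := by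
      have hd : dist s ((k : ℝ) * (q : ℝ)) < h0 := by
        rw [Real.dist_eq, abs_lt]
        have hid : ((k : ℝ) + 1) * (q : ℝ) = (k : ℝ) * (q : ℝ) + (q : ℝ) := by ring
        constructor <;> linarith [hk1, hk2, hQh0, hh0]
      have huc1 := hucd s hsI ((k : ℝ) * (q : ℝ)) hkqI hd
      rw [Real.dist_eq] at huc1
      have h2 := (hw k).1
      calc |f s - (w k : ℝ)| ≤ |f s - f ((k : ℝ) * (q : ℝ))| +
            |f ((k : ℝ) * (q : ℝ)) - (w k : ℝ)| := abs_sub_le _ _ _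
        _ ≤ ε + ε := by
            rw [abs_sub_comm (f ((k : ℝ) * (q : ℝ)))]
            exact add_le_add huc1.le h2
        _ = 2 * ε := by ring
    have e2 : |f s - (w (k + 1) : ℝ)| ≤ 2 * ε := by
      have hd : dist s (((k : ℝ) + 1) * (q : ℝ)) < h0 := by
        rw [Real.dist_eq, abs_lt]
        have hid : ((k : ℝ) + 1) * (q : ℝ) = (k : ℝ) * (q : ℝ) + (q : ℝ) := by ring
        constructor <;> linarith [hk1, hk2, hQh0, hh0]
      have huc1 := hucd s hsI (((k : ℝ) + 1) * (q : ℝ)) hkq1I hd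
      rw [Real.dist_eq] at huc1
      have h2 := (hw (k + 1)).1
      have hcast : ((k + 1 : ℕ) : ℝ) = (k : ℝ) + 1 := by push_cast; ring
      rw [hcast] at h2
      calc |f s - (w (k + 1) : ℝ)| ≤ |f s - f (((k : ℝ) + 1) * (q : ℝ))| +
            |f (((k : ℝ) + 1) * (q : ℝ)) - (w (k + 1) : ℝ)| := abs_sub_le _ _ _
        _ ≤ ε + ε := by
            rw [abs_sub_comm (f (((k : ℝ) + 1) * (q : ℝ)))]
            exact add_le_add huc1.le h2
        _ = 2 * ε := by ring
    have hsplit : f s - g s = (1 - lam) * (f s - (w k : ℝ)) + lam * (f s - (w (k + 1) : ℝ)) := by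
      rw [hgx]; ring
    calc |f s - g s| = |(1 - lam) * (f s - (w k : ℝ)) + lam * (f s - (w (k + 1) : ℝ))| := by
          rw [hsplit]
      _ ≤ |(1 - lam) * (f s - (w k : ℝ))| + |lam * (f s - (w (k + 1) : ℝ))| := abs_add_le _ _
      _ = (1 - lam) * |f s - (w k : ℝ)| + lam * |f s - (w (k + 1) : ℝ)| := by
          rw [abs_mul, abs_mul, abs_of_nonneg (by linarith : (0:ℝ) ≤ 1 - lam),
            abs_of_nonneg hl0]
      _ ≤ (1 - lam) * (2 * ε) + lam * (2 * ε) := add_le_add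
          (mul_le_mul_of_nonneg_left e1 (by linarith))
          (mul_le_mul_of_nonneg_left e2 hl0)
      _ = 2 * ε := by ring
  -- points with small |f| are close to the zero set
  have hKz : ∀ y : ℝ, 0 ≤ y → y ≤ t → |f y| ≤ ε → ∃ z ∈ zeroSet f, |y - z| < δ / 2 := by
    intro y hy0 hyt hyf
    have hyK : y ∉ K := by
      intro hyK
      have := hmK y hyK
      linarith [hεm]
    have hnotle : ¬ δ / 2 ≤ Metric.infDist y (zeroSet f) := by
      intro hcon
      exact hyK ⟨⟨hy0, hyt⟩, hcon⟩
    obtain ⟨z, hz, hdz⟩ := (Metric.infDist_lt_iff hZne).1 (not_le.1 hnotle)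
    exact ⟨z, hz, by rw [← Real.dist_eq]; exact hdz⟩
  refine ⟨g, ?_, ?_, ?_, ?_⟩
  -- PiecewiseAffineRat
  · refine ⟨n, fun i => ((i : ℕ) : ℚ) * q, fun i => w (i : ℕ), ?_, ?_, ?_, ?_, ?_⟩
    · intro i j hij
      exact mul_lt_mul_of_pos_right (by exact_mod_cast hij) hq0'
    · simp
    · simpa using hw0
    · intro i x h1 h2
      have hkn : (i : ℕ) < n := i.isLt
      simp only [Fin.coe_castSucc, Fin.val_succ] at h1 h2 ⊢
      push_cast at h1 h2 ⊢
      rw [haffine (i : ℕ) hkn x h1 h2,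
        show (((i : ℕ) : ℝ) + 1) * (q : ℝ) - ((i : ℕ) : ℝ) * (q : ℝ) = (q : ℝ) by ring]
    · intro x hx
      refine htail x ?_
      simp only [Fin.val_last] at hx
      exact_mod_cast hx
  -- dCU
  · have hsup : dCU t f g ≤ 2 * ε := by
      rw [dCU]
      apply Real.sSup_le
      · rintro y ⟨s, hs, rfl⟩
        exact hbound s hs
      · linarith
    linarith [hερ]
  -- dCZ
  · have hmem : (3 * δ / 4) ∈ {δ' : ℝ | 0 < δ' ∧
        (∀ s, 0 ≤ s → s ≤ t - δ' → f s = 0 → ∃ z ∈ zeroSet g, |s - z| < δ') ∧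
        (∀ s, 0 ≤ s → s ≤ t - δ' → g s = 0 → ∃ z ∈ zeroSet f, |s - z| < δ')} := by
      refine ⟨by linarith, ?_, ?_⟩
      · -- zeros of f are near zeros of g
        intro s hs0 hst hfs
        set k : ℕ := ⌊s / (q : ℝ)⌋₊ with hkdef
        have hsq0 : 0 ≤ s / (q : ℝ) := div_nonneg hs0 hQ0.le
        have hk1 : (k : ℝ) * (q : ℝ) ≤ s := by
          rw [← le_div_iff₀ hQ0]
          exact Nat.floor_le hsq0
        have hk2 : s < ((k : ℝ) + 1) * (q : ℝ) := by
          rw [← div_lt_iff₀ hQ0]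
          exact Nat.lt_floor_add_one _
        have hkn : k < n := by
          rw [hkdef, Nat.floor_lt hsq0, div_lt_iff₀ hQ0]
          linarith
        have hkqI : (k : ℝ) * (q : ℝ) ∈ Set.Icc (0 : ℝ) (t + 1) :=
          ⟨by positivity, by linarith⟩
        have hsI : s ∈ Set.Icc (0 : ℝ) (t + 1) := ⟨hs0, by linarith⟩
        have hd : dist ((k : ℝ) * (q : ℝ)) s < h0 := by
          rw [Real.dist_eq, abs_lt]
          have hid : ((k : ℝ) + 1) * (q : ℝ) = (k : ℝ) * (q : ℝ) + (q : ℝ) := by ring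
          constructor <;> linarith [hQh0, hh0]
        have huc1 := hucd ((k : ℝ) * (q : ℝ)) hkqI s hsI hd
        rw [Real.dist_eq, hfs, sub_zero] at huc1
        have hwk0 : w k = 0 := (hw k).2.1 huc1
        refine ⟨(k : ℝ) * (q : ℝ), ⟨by positivity, ?_⟩, ?_⟩
        · rw [hgrid k hkn.le, hwk0]
          simp
        · rw [abs_of_nonneg (by linarith)]
          linarith
      · -- zeros of g are near zeros of f
        intro s hs0 hst hgs
        obtain ⟨k, hkn, hk1, hk2, lam, hl0, hl1, hgx⟩ :=
          hstruct s hs0 (by linarith)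
        have hcast : ((k + 1 : ℕ) : ℝ) = (k : ℝ) + 1 := by push_cast; ring
        have hkqt : (k : ℝ) * (q : ℝ) ≤ t := by linarith
        have hid : ((k : ℝ) + 1) * (q : ℝ) = (k : ℝ) * (q : ℝ) + (q : ℝ) := by ring
        have hkq1t : ((k : ℝ) + 1) * (q : ℝ) ≤ t := by linarith [hQδ, hδ]
        by_cases hwk : ((w k : ℚ) : ℝ) = 0
        · have habs : |f ((k : ℝ) * (q : ℝ))| ≤ ε := by
            have := (hw k).1
            rw [hwk, zero_sub, abs_neg] at this
            exact this
          obtain ⟨z, hz, hdz⟩ := hKz ((k : ℝ) * (q : ℝ)) (by positivity) hkqt habs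
          refine ⟨z, hz, ?_⟩
          calc |s - z| ≤ |s - (k : ℝ) * (q : ℝ)| + |(k : ℝ) * (q : ℝ) - z| := abs_sub_le _ _ _
            _ < (q : ℝ) + δ / 2 := by
                apply add_lt_add_of_le_of_lt _ hdz
                rw [abs_of_nonneg (by linarith)]
                linarith
            _ < 3 * δ / 4 := by linarith
        · by_cases hwk1 : ((w (k + 1) : ℚ) : ℝ) = 0
          · have habs : |f (((k : ℝ) + 1) * (q : ℝ))| ≤ ε := by
              have := (hw (k + 1)).1
              rw [hcast, hwk1, zero_sub, abs_neg] at this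
              exact this
            obtain ⟨z, hz, hdz⟩ := hKz (((k : ℝ) + 1) * (q : ℝ)) (by positivity) hkq1t habs
            refine ⟨z, hz, ?_⟩
            calc |s - z| ≤ |s - ((k : ℝ) + 1) * (q : ℝ)| + |((k : ℝ) + 1) * (q : ℝ) - z| :=
                abs_sub_le _ _ _
              _ < (q : ℝ) + δ / 2 := by
                  apply add_lt_add_of_le_of_lt _ hdz
                  rw [abs_of_nonpos (by linarith)]
                  linarith
              _ < 3 * δ / 4 := by linarith
          · -- both endpoint values nonzero : they must have opposite signs
            rw [hgs] at hgx
            have hlam0 : lam ≠ 0 := by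
              intro hcon
              rw [hcon] at hgx
              simp at hgx
              exact hwk hgx.symm
            have hlam1 : lam ≠ 1 := by
              intro hcon
              rw [hcon] at hgx
              simp at hgx
              exact hwk1 hgx.symm
            have hl0' : 0 < lam := lt_of_le_of_ne hl0 (Ne.symm hlam0)
            have hl1' : lam < 1 := lt_of_le_of_ne hl1 hlam1
            have hkk1 : (k : ℝ) * (q : ℝ) ≤ ((k : ℝ) + 1) * (q : ℝ) :=
              mul_le_mul_of_nonneg_right (by linarith) hQ0.le
            have hivt : ∃ z ∈ Set.Icc ((k : ℝ) * (q : ℝ)) (((k : ℝ) + 1) * (q : ℝ)),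
                f z = 0 := by
              rcases lt_trichotomy ((w k : ℚ) : ℝ) 0 with hneg | hzero | hpos
              · have hbpos : 0 < ((w (k + 1) : ℚ) : ℝ) := by
                  have t1 : (1 - lam) * ((w k : ℚ) : ℝ) < 0 :=
                    mul_neg_of_pos_of_neg (by linarith) hneg
                  have t2 : 0 < lam * ((w (k + 1) : ℚ) : ℝ) := by linarith [hgx]
                  rcases mul_pos_iff.1 t2 with ⟨_, hb⟩ | ⟨hl, _⟩
                  · exact hb
                  · linarith
                have hfa : f ((k : ℝ) * (q : ℝ)) ≤ -ε := (hw k).2.2.2.1 hneg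
                have hfb : ε ≤ f (((k : ℝ) + 1) * (q : ℝ)) := by
                  have := (hw (k + 1)).2.2.1 hbpos
                  rwa [hcast] at this
                have h0mem : (0 : ℝ) ∈ Set.Icc (f ((k : ℝ) * (q : ℝ)))
                    (f (((k : ℝ) + 1) * (q : ℝ))) := ⟨by linarith, by linarith⟩
                obtain ⟨z, hzmem, hzf⟩ := intermediate_value_Icc hkk1 hf.continuousOn h0mem
                exact ⟨z, hzmem, hzf⟩
              · exact absurd hzero hwk
              · have hbneg : ((w (k + 1) : ℚ) : ℝ) < 0 := by
                  have t1 : 0 < (1 - lam) * ((w k : ℚ) : ℝ) :=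
                    mul_pos (by linarith) hpos
                  have t2 : lam * ((w (k + 1) : ℚ) : ℝ) < 0 := by linarith [hgx]
                  rcases mul_neg_iff.1 t2 with ⟨_, hb⟩ | ⟨hl, _⟩
                  · exact hb
                  · linarith
                have hfa : ε ≤ f ((k : ℝ) * (q : ℝ)) := (hw k).2.2.1 hpos
                have hfb : f (((k : ℝ) + 1) * (q : ℝ)) ≤ -ε := by
                  have := (hw (k + 1)).2.2.2.1 hbneg
                  rwa [hcast] at this
                have h0mem : (0 : ℝ) ∈ Set.Icc (f (((k : ℝ) + 1) * (q : ℝ)))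
                    (f ((k : ℝ) * (q : ℝ))) := ⟨by linarith, by linarith⟩
                obtain ⟨z, hzmem, hzf⟩ := intermediate_value_Icc' hkk1 hf.continuousOn h0mem
                exact ⟨z, hzmem, hzf⟩
            obtain ⟨z, hzmem, hzf⟩ := hivt
            refine ⟨z, ⟨le_trans (by positivity) hzmem.1, hzf⟩, ?_⟩
            rw [abs_lt]
            have hd : ((k : ℝ) + 1) * (q : ℝ) - (k : ℝ) * (q : ℝ) = (q : ℝ) := by ring
            constructor
            · linarith [hzmem.1, hzmem.2, hQδ, hδ]
            · linarith [hzmem.1, hzmem.2, hQδ, hδ]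
    have hle : dCZ t f g ≤ 3 * δ / 4 := by
      rw [dCZ]
      exact csInf_le ⟨0, fun y hy => hy.1.le⟩ hmem
    linarith
  -- nonnegativity
  · intro hfp s hs0
    have hwpos : ∀ j : ℕ, 0 ≤ ((w j : ℚ) : ℝ) :=
      fun j => (hw j).2.2.2.2 (hfp _ (by positivity))
    rcases le_or_gt s ((n : ℝ) * (q : ℝ)) with hle | hlt
    · obtain ⟨k, _, _, _, lam, hl0, hl1, hgx⟩ := hstruct s hs0 hle
      rw [hgx]
      exact add_nonneg (mul_nonneg (by linarith) (hwpos k)) (mul_nonneg hl0 (hwpos (k + 1)))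
    · rw [htail s hlt.le]
      exact hwpos n
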